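/- arXiv:1807.01070 — 2 statements merged into one kernel-verified Lean document; each statement's English description precedes it below -/
import Mathlib

section
/- In the bipartite random graph G(n, n, 1/√n) with n even, for every constant δ > 0, with probability at least 1 − (n−1)·2·exp(−δ²n/30), the number of pairs {a1, a2} of distinct vertices of A having at least 5 common neighbors in B is at most (1+δ)·n²/10. -/
open MeasureTheory


open Finset




private noncomputable def Fkey : ℝ → ℝ :=
  fun x => x/5 + 2*x^2/15 + Real.log 5 - Real.log (4 + Real.exp x)

private noncomputable def Fkey' : ℝ → ℝ :=
  fun x => 1/5 + 4*x/15 - Real.exp x/(4 + Real.exp x)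

private lemma denom_pos (x : ℝ) : 0 < 4 + Real.exp x := by positivity

private lemma hasDerivAt_Fkey (x : ℝ) : HasDerivAt Fkey (Fkey' x) x := by
  have h1 : HasDerivAt (fun x : ℝ => 4 + Real.exp x) (Real.exp x) x := by
    simpa using (Real.hasDerivAt_exp x).const_add 4
  have h2 : HasDerivAt (fun x : ℝ => Real.log (4 + Real.exp x))
      (Real.exp x / (4 + Real.exp x)) x := h1.log (denom_pos x).ne'
  have h3 : HasDerivAt (fun x : ℝ => x/5 + 2*x^2/15 + Real.log 5)
      (1/5 + 4*x/15) x := by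
    have : HasDerivAt (fun x : ℝ => x/5 + 2*x^2/15 + Real.log 5)
        (1/5 + (2*((2:ℕ)*x^(2-1)))/15) x :=
      (((hasDerivAt_id x).div_const 5).add
        (((hasDerivAt_pow 2 x).const_mul 2).div_const 15)).add_const _
    convert this using 1; push_cast; ring
  rw [show Fkey = (fun x : ℝ => x/5 + 2*x^2/15 + Real.log 5) - fun x => Real.log (4 + Real.exp x)
    from rfl]
  simpa [Fkey'] using h3.sub h2

private lemma hasDerivAt_Fkey' (x : ℝ) :
    HasDerivAt Fkey' (4/15 - 4*Real.exp x/(4 + Real.exp x)^2) x := by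
  have h1 : HasDerivAt (fun x : ℝ => 4 + Real.exp x) (Real.exp x) x := by
    simpa using (Real.hasDerivAt_exp x).const_add 4
  have h2 : HasDerivAt (fun x : ℝ => Real.exp x/(4 + Real.exp x))
      ((Real.exp x * (4 + Real.exp x) - Real.exp x * Real.exp x)/(4 + Real.exp x)^2) x :=
    (Real.hasDerivAt_exp x).div h1 (denom_pos x).ne'
  have h3 : HasDerivAt (fun x : ℝ => 1/5 + 4*x/15) (4/15) x := by
    have : HasDerivAt (fun x : ℝ => 1/5 + 4*x/15) (0 + 4*1/15) x :=
      (hasDerivAt_const x (1/5:ℝ)).add (((hasDerivAt_id x).const_mul 4).div_const 15)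
    convert this using 1; ring
  have := h3.sub h2
  refine this.congr_deriv ?_
  ring

private lemma Fkey'_nonneg {x : ℝ} (hx : 0 ≤ x) : 0 ≤ Fkey' x := by
  have hmono : Monotone Fkey' := by
    apply monotone_of_deriv_nonneg
    · exact fun y => (hasDerivAt_Fkey' y).differentiableAt
    · intro y
      rw [(hasDerivAt_Fkey' y).deriv]
      have h : 16 * Real.exp y ≤ (4 + Real.exp y)^2 := by nlinarith [sq_nonneg (4 - Real.exp y)]
      have hp : (0:ℝ) < (4 + Real.exp y)^2 := by positivity
      rw [sub_nonneg, div_le_iff₀ hp]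
      nlinarith
  have h0 : Fkey' 0 = 0 := by simp [Fkey']; norm_num
  calc (0:ℝ) = Fkey' 0 := h0.symm
    _ ≤ Fkey' x := hmono hx

private lemma Fkey_nonneg {x : ℝ} (hx : 0 ≤ x) : 0 ≤ Fkey x := by
  have hmono : MonotoneOn Fkey (Set.Ici 0) := by
    apply monotoneOn_of_deriv_nonneg (convex_Ici 0)
    · exact (Differentiable.continuous (fun y => (hasDerivAt_Fkey y).differentiableAt)).continuousOn
    · intro y _
      exact (hasDerivAt_Fkey y).differentiableAt.differentiableWithinAt
    · intro y hy
      rw [(hasDerivAt_Fkey y).deriv]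
      exact Fkey'_nonneg (le_of_lt (by simpa using hy))
  have h0 : Fkey 0 = 0 := by simp [Fkey]; norm_num
  calc (0:ℝ) = Fkey 0 := h0.symm
    _ ≤ Fkey x := hmono (by simp) (by simpa using hx) hx

/-- The key analytic inequality. -/
lemma key_exp_ineq {x : ℝ} (hx : 0 ≤ x) :
    4 + Real.exp x ≤ 5 * Real.exp (x/5 + 2*x^2/15) := by
  have h := Fkey_nonneg hx
  have hlog : Real.log (4 + Real.exp x) ≤ Real.log 5 + (x/5 + 2*x^2/15) := by
    simp only [Fkey] at h; linarith
  have := Real.exp_le_exp.mpr hlog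
  rwa [Real.exp_log (denom_pos x), Real.exp_add, Real.exp_log (by norm_num : (0:ℝ) < 5)] at this


open Finset

section Factor
variable {ι κ : Type*} [Fintype ι] [Fintype κ] [DecidableEq ι] [DecidableEq κ]

/-- sum over boolean assignments of product = product of sums -/
lemma sum_pi_bool_prod (g : ι → Bool → ℝ) :
    ∑ σ : ι → Bool, ∏ i, g i (σ i) = ∏ i, (g i true + g i false) := by
  have h := Fintype.prod_sum (fun i (b : Bool) => g i b)
  simp only [Fintype.sum_bool] at h
  exact h.symm

/-- extension of a partial assignment on a fiber by `false` -/
def fext (c : ι → κ) (k : κ) (σ : {i // c i = k} → Bool) : ι → Bool :=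
  fun i => if h : c i = k then σ ⟨i, h⟩ else false

/-- Key "independence" factorization, purely algebraic. -/
lemma weighted_prod_factor (c : ι → κ) (wt : ι → Bool → ℝ) (F : κ → (ι → Bool) → ℝ)
    (hF : ∀ k (ω ω' : ι → Bool), (∀ i, c i = k → ω i = ω' i) → F k ω = F k ω') :
    ∑ ω : ι → Bool, (∏ i, wt i (ω i)) * ∏ k, F k ω
      = ∏ k, ∑ σ : {i // c i = k} → Bool,
          (∏ j, wt j.1 (σ j)) * F k (fext c k σ) := by
  classical
  let Φ : (∀ k, {i // c i = k} → Bool) ≃ (ι → Bool) :=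
    { toFun := fun g i => g (c i) ⟨i, rfl⟩
      invFun := fun ω k j => ω j.1
      left_inv := by
        intro g; funext k j
        obtain ⟨i, hi⟩ := j
        subst hi; rfl
      right_inv := by intro ω; rfl }
  rw [← Φ.sum_comp (fun ω => (∏ i, wt i (ω i)) * ∏ k, F k ω)]
  have hsum : ∀ g : (∀ k, {i // c i = k} → Bool),
      (∏ i, wt i (Φ g i)) * ∏ k, F k (Φ g)
        = ∏ k, ((∏ j : {i // c i = k}, wt j.1 (g k j)) * F k (fext c k (g k))) := by
    intro g
    rw [prod_mul_distrib]
    congr 1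
    · rw [← Fintype.prod_fiberwise c (fun i => wt i (Φ g i))]
      apply Fintype.prod_congr
      intro k
      apply Fintype.prod_congr
      intro j
      obtain ⟨i, hi⟩ := j
      subst hi; rfl
    · apply Fintype.prod_congr
      intro k
      apply hF
      intro i hik
      subst hik
      show g (c i) ⟨i, rfl⟩ = fext c (c i) (g (c i)) i
      simp [fext]
  rw [Fintype.sum_congr (fun g => (∏ i, wt i (Φ g i)) * ∏ k, F k (Φ g)) _ hsum]
  exact (Fintype.prod_sum fun k σ => (∏ j : {i // c i = k}, wt j.1 (σ j)) * F k (fext c k σ)).symm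

/-- total mass 1 -/
lemma sum_pi_bool_wt (wt : ι → Bool → ℝ) (h1 : ∀ i, wt i true + wt i false = 1) :
    ∑ σ : ι → Bool, ∏ i, wt i (σ i) = 1 := by
  rw [sum_pi_bool_prod]
  simp [h1]
end Factor


/-- ℕ-level round-robin partner. -/
def rrpiV (n r a : ℕ) : ℕ :=
  if a = n - 1 then r else if a = r then n - 1 else (2*r + ((n-1) - a)) % (n-1)

lemma rrpiV_lt {n r a : ℕ} (hr : r < n - 1) (ha : a < n) : rrpiV n r a < n := by
  unfold rrpiV
  split
  · omega
  · split
    · omega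
    · have := Nat.mod_lt (2*r + ((n-1) - a)) (show 0 < n-1 by omega)
      omega

/-- round-robin partner function: in round `r`, vertex `a` is paired with `rrpi n r a`. -/
def rrpi (n : ℕ) (r : Fin (n-1)) (a : Fin n) : Fin n :=
  ⟨rrpiV n r.1 a.1, rrpiV_lt r.2 a.2⟩

section RR
variable {n : ℕ}

private lemma two_cancel (hn : Even n) (hn2 : 2 ≤ n) (x y : ZMod (n-1))
    (h : 2 * x = 2 * y) : x = y := by
  obtain ⟨k, hk⟩ := hn
  have hu : ((n/2 : ℕ) : ZMod (n-1)) * 2 = 1 := by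
    have e1 : ((n/2 : ℕ) : ZMod (n-1)) * 2 = ((n/2 * 2 : ℕ) : ZMod (n-1)) := by push_cast; ring
    have e2 : n/2*2 = (n-1) + 1 := by omega
    rw [e1, e2]
    push_cast
    rw [ZMod.natCast_self]
    ring
  calc x = (((n/2 : ℕ) : ZMod (n-1)) * 2) * x := by rw [hu]; ring
    _ = ((n/2 : ℕ) : ZMod (n-1)) * (2 * x) := by ring
    _ = ((n/2 : ℕ) : ZMod (n-1)) * (2 * y) := by rw [h]
    _ = (((n/2 : ℕ) : ZMod (n-1)) * 2) * y := by ring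
    _ = y := by rw [hu]; ring

private lemma cast_bV {r a : ℕ} (ha : a < n - 1) :
    (((2*r + ((n-1) - a)) % (n-1) : ℕ) : ZMod (n-1))
      = 2 * (r : ZMod (n-1)) - (a : ZMod (n-1)) := by
  rw [ZMod.natCast_mod]
  push_cast [Nat.cast_sub ha.le]
  rw [ZMod.natCast_self]
  ring

private lemma val_inj_of_lt {x y : ℕ} (hx : x < n - 1) (hy : y < n - 1)
    (h : (x : ZMod (n-1)) = (y : ZMod (n-1))) : x = y := by
  have hx' := ZMod.val_cast_of_lt hx
  have hy' := ZMod.val_cast_of_lt hy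
  rw [← hx', ← hy', h]

/-- rrpiV is an involution -/
lemma rrpiV_invol (hn : Even n) (hn2 : 2 ≤ n) {r a : ℕ} (hr : r < n - 1) (ha : a < n) :
    rrpiV n r (rrpiV n r a) = a := by
  have hm : 0 < n - 1 := by omega
  by_cases h1 : a = n - 1
  · rw [h1]
    unfold rrpiV
    rw [if_pos rfl, if_neg (by omega : ¬ r = n - 1), if_pos rfl]
  · by_cases h2 : a = r
    · unfold rrpiV
      rw [if_neg h1, if_pos h2, if_pos rfl, h2]
    · have ha' : a < n - 1 := by omega
      have hstep : rrpiV n r a = (2*r + ((n-1) - a)) % (n-1) := by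
        unfold rrpiV; rw [if_neg h1, if_neg h2]
      set b : ℕ := (2*r + ((n-1) - a)) % (n-1) with hbdef
      have hb : b < n - 1 := Nat.mod_lt _ hm
      have hcastb : ((b : ℕ) : ZMod (n-1)) = 2 * (r : ZMod (n-1)) - (a : ZMod (n-1)) :=
        cast_bV ha'
      have hbner : b ≠ r := by
        intro hbr
        apply h2
        refine val_inj_of_lt ha' hr ?_
        have h3 : ((b:ℕ) : ZMod (n-1)) = (r : ZMod (n-1)) := by rw [hbr]
        rw [hcastb] at h3
        linear_combination -h3
      rw [hstep]
      have hstep2 : rrpiV n r b = (2*r + ((n-1) - b)) % (n-1) := by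
        unfold rrpiV; rw [if_neg (by omega : ¬ b = n - 1), if_neg hbner]
      rw [hstep2]
      refine val_inj_of_lt (Nat.mod_lt _ hm) ha' ?_
      rw [cast_bV hb, hcastb]
      ring

/-- rrpiV has no fixed points -/
lemma rrpiV_ne (hn : Even n) (hn2 : 2 ≤ n) {r a : ℕ} (hr : r < n - 1) (ha : a < n) :
    rrpiV n r a ≠ a := by
  have hm : 0 < n - 1 := by omega
  by_cases h1 : a = n - 1
  · unfold rrpiV; rw [if_pos h1]; omega
  · by_cases h2 : a = r
    · unfold rrpiV; rw [if_neg h1, if_pos h2]; omega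
    · have ha' : a < n - 1 := by omega
      unfold rrpiV; rw [if_neg h1, if_neg h2]
      intro hfix
      apply h2
      refine val_inj_of_lt ha' hr ?_
      have h3 := cast_bV (r := r) ha'
      rw [hfix] at h3
      -- a = 2r - a  in ZMod, so 2a = 2r, so a = r
      refine two_cancel hn hn2 (a : ZMod (n-1)) (r : ZMod (n-1)) ?_
      linear_combination h3

/-- every pair is matched in some round -/
lemma rrpiV_covers (hn : Even n) (hn2 : 2 ≤ n) {i j : ℕ} (hi : i < n) (hj : j < n)
    (hij : i ≠ j) : ∃ r : ℕ, r < n - 1 ∧ rrpiV n r i = j := by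
  have hm : 0 < n - 1 := by omega
  haveI : NeZero (n-1) := ⟨by omega⟩
  by_cases h1 : j = n - 1
  · refine ⟨i, by omega, ?_⟩
    unfold rrpiV
    rw [if_neg (by omega : ¬ i = n-1), if_pos rfl, h1]
  · by_cases h2 : i = n - 1
    · refine ⟨j, by omega, ?_⟩
      unfold rrpiV
      rw [if_pos h2]
    · have hi' : i < n - 1 := by omega
      have hj' : j < n - 1 := by omega
      set rv : ZMod (n-1) := ((i + j : ℕ) : ZMod (n-1)) * ((n/2 : ℕ) : ZMod (n-1)) with hrv
      refine ⟨rv.val, rv.val_lt, ?_⟩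
      have hcast : ((rv.val : ℕ) : ZMod (n-1)) = rv := ZMod.natCast_rightInverse rv
      have h2rv : 2 * rv = (i : ZMod (n-1)) + (j : ZMod (n-1)) := by
        obtain ⟨k, hk⟩ := hn
        have hu : ((n/2 : ℕ) : ZMod (n-1)) * 2 = 1 := by
          have e1 : ((n/2 : ℕ) : ZMod (n-1)) * 2 = ((n/2 * 2 : ℕ) : ZMod (n-1)) := by
            push_cast; ring
          have e2 : n/2*2 = (n-1) + 1 := by omega
          rw [e1, e2]
          push_cast
          rw [ZMod.natCast_self]
          ring
        rw [hrv]
        push_cast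
        linear_combination ((i : ZMod (n-1)) + (j : ZMod (n-1))) * hu
      have hir : i ≠ rv.val := by
        intro hirv
        apply hij
        refine val_inj_of_lt hi' hj' ?_
        have : (i : ZMod (n-1)) = rv := by rw [hirv, hcast]
        have h4 : 2 * (i : ZMod (n-1)) = (i : ZMod (n-1)) + (j : ZMod (n-1)) := by
          rw [this, h2rv, ← this]
        linear_combination h4
      unfold rrpiV
      rw [if_neg h2, if_neg hir]
      refine val_inj_of_lt (Nat.mod_lt _ hm) hj' ?_
      rw [cast_bV hi', hcast]
      linear_combination h2rv
end RR

section Glue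
variable {n : ℕ}
lemma rrpi_invol (hn : Even n) (hn2 : 2 ≤ n) (r : Fin (n-1)) (a : Fin n) :
    rrpi n r (rrpi n r a) = a :=
  Fin.ext (rrpiV_invol hn hn2 r.2 a.2)

lemma rrpi_ne (hn : Even n) (hn2 : 2 ≤ n) (r : Fin (n-1)) (a : Fin n) :
    rrpi n r a ≠ a :=
  fun h => rrpiV_ne hn hn2 r.2 a.2 (congrArg Fin.val h)

lemma rrpi_covers (hn : Even n) (hn2 : 2 ≤ n) (i j : Fin n) (hij : i ≠ j) :
    ∃ r : Fin (n-1), rrpi n r i = j := by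
  obtain ⟨r, hr, heq⟩ := rrpiV_covers hn hn2 i.2 j.2 (fun h => hij (Fin.ext h))
  exact ⟨⟨r, hr⟩, Fin.ext heq⟩
end Glue

open Finset


section Count
variable {n : ℕ}

lemma card_reps (hn : Even n) (hn2 : 2 ≤ n) (r : Fin (n-1)) :
    (univ.filter fun k : Fin n => k < rrpi n r k).card * 2 = n := by
  classical
  have hAB : (univ.filter fun k : Fin n => k < rrpi n r k).card
      = (univ.filter fun k : Fin n => rrpi n r k < k).card := by
    apply Finset.card_bij (fun k _ => rrpi n r k)
    · intro k hk
      simp only [mem_filter, mem_univ, true_and] at hk ⊢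
      rw [rrpi_invol hn hn2]
      exact hk
    · intro a ha b hb hab
      have := congrArg (rrpi n r) hab
      rwa [rrpi_invol hn hn2, rrpi_invol hn hn2] at this
    · intro b hb
      simp only [mem_filter, mem_univ, true_and] at hb ⊢
      exact ⟨rrpi n r b, by rw [rrpi_invol hn hn2]; exact hb, rrpi_invol hn hn2 r b⟩
  have hsplit := Finset.card_filter_add_card_filter_not
    (s := (univ : Finset (Fin n))) (p := fun k => k < rrpi n r k)
  have hneg : (univ.filter fun k : Fin n => ¬ k < rrpi n r k)
      = (univ.filter fun k : Fin n => rrpi n r k < k) := by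
    apply filter_congr
    intro k _
    simp only [not_lt, eq_iff_iff]
    constructor
    · intro h; exact lt_of_le_of_ne h (rrpi_ne hn hn2 r k)
    · exact le_of_lt
  rw [hneg, ← hAB] at hsplit
  rw [mul_two, hsplit, card_univ, Fintype.card_fin]

/-- Abbreviation for a bad pair. -/
def BadP (n : ℕ) (ω : (Fin n × Fin n) → Bool) (i j : Fin n) : Prop :=
  5 ≤ ((univ : Finset (Fin n)).filter fun b => ω (i,b) = true ∧ ω (j,b) = true).card

instance (n : ℕ) (ω : (Fin n × Fin n) → Bool) (i j : Fin n) : Decidable (BadP n ω i j) := by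
  unfold BadP; infer_instance

def badPairCount' (n : ℕ) (ω : (Fin n × Fin n) → Bool) : ℕ :=
  ((Finset.univ : Finset (Finset (Fin n))).filter fun P =>
    P.card = 2 ∧
      5 ≤ ((Finset.univ : Finset (Fin n)).filter fun b => ∀ a ∈ P, ω (a, b) = true).card).card

lemma count_le_sum_rounds (hn : Even n) (hn2 : 2 ≤ n) (ω : (Fin n × Fin n) → Bool) :
    badPairCount' n ω ≤ ∑ r : Fin (n-1),
      (univ.filter fun k : Fin n => k < rrpi n r k ∧ BadP n ω k (rrpi n r k)).card := by
  classical
  rw [← Finset.card_sigma]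
  -- facts about 2-element sets in the source
  have hfacts : ∀ P ∈ ((Finset.univ : Finset (Finset (Fin n))).filter fun P =>
      P.card = 2 ∧
        5 ≤ ((Finset.univ : Finset (Fin n)).filter fun b => ∀ a ∈ P, ω (a, b) = true).card),
      ∃ hne : P.Nonempty, P.min' hne ≠ P.max' hne ∧ P = {P.min' hne, P.max' hne} := by
    intro P hP
    simp only [mem_filter, mem_univ, true_and] at hP
    obtain ⟨hcard, _⟩ := hP
    have hne : P.Nonempty := by rw [← Finset.card_pos, hcard]; norm_num
    have hlt : P.min' hne < P.max' hne := Finset.min'_lt_max'_of_card P (by omega)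
    refine ⟨hne, ne_of_lt hlt, ?_⟩
    symm
    apply Finset.eq_of_subset_of_card_le
    · intro x hx
      simp only [mem_insert, mem_singleton] at hx
      rcases hx with h | h <;> rw [h]
      · exact Finset.min'_mem P hne
      · exact Finset.max'_mem P hne
    · rw [hcard, Finset.card_pair (ne_of_lt hlt)]
  apply Finset.card_le_card_of_injOn
    (fun P =>
      if h : ∃ hne : P.Nonempty, P.min' hne ≠ P.max' hne
      then ⟨Classical.choose (rrpi_covers hn hn2 _ _ h.choose_spec), P.min' h.choose⟩
      else ⟨⟨0, by omega⟩, ⟨0, by omega⟩⟩)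
  · intro P hP
    obtain ⟨hne, hminmax, hPeq⟩ := hfacts P hP
    have hex : ∃ hne : P.Nonempty, P.min' hne ≠ P.max' hne := ⟨hne, hminmax⟩
    rw [Finset.mem_coe]; dsimp only
    rw [dif_pos hex]
    have hspec := Classical.choose_spec (rrpi_covers hn hn2 _ _ hex.choose_spec)
    simp only [Finset.mem_sigma, mem_univ, mem_filter, true_and]
    constructor
    · rw [hspec]
      exact lt_of_le_of_ne (Finset.min'_le _ _ (Finset.max'_mem P hex.choose))
        hex.choose_spec
    · rw [hspec]
      simp only [Finset.mem_coe, mem_filter, mem_univ, true_and] at hP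
      obtain ⟨hcard, hbad⟩ := hP
      unfold BadP
      refine le_trans hbad (le_of_eq ?_)
      congr 1
      apply filter_congr
      intro b _
      constructor
      · intro h
        exact ⟨h _ (Finset.min'_mem P hex.choose), h _ (Finset.max'_mem P hex.choose)⟩
      · intro ⟨h1, h2⟩ a ha
        have : P = {P.min' hex.choose, P.max' hex.choose} := hPeq
        rw [this] at ha
        simp only [mem_insert, mem_singleton] at ha
        rcases ha with h | h <;> rw [h]
        · exact h1
        · exact h2
  · intro P hP Q hQ hfPQ
    dsimp only at hfPQ
    replace hP := Finset.mem_coe.mp hP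
    replace hQ := Finset.mem_coe.mp hQ
    obtain ⟨hneP, hmmP, hPeq⟩ := hfacts P hP
    obtain ⟨hneQ, hmmQ, hQeq⟩ := hfacts Q hQ
    have hexP : ∃ hne : P.Nonempty, P.min' hne ≠ P.max' hne := ⟨hneP, hmmP⟩
    have hexQ : ∃ hne : Q.Nonempty, Q.min' hne ≠ Q.max' hne := ⟨hneQ, hmmQ⟩
    rw [dif_pos hexP, dif_pos hexQ] at hfPQ
    have hr : Classical.choose (rrpi_covers hn hn2 _ _ hexP.choose_spec)
        = Classical.choose (rrpi_covers hn hn2 _ _ hexQ.choose_spec) := by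
      exact (Sigma.mk.inj_iff.mp hfPQ).1
    have hmin : P.min' hexP.choose = Q.min' hexQ.choose := by
      have := (Sigma.mk.inj_iff.mp hfPQ).2
      exact eq_of_heq this
    have hspecP := Classical.choose_spec (rrpi_covers hn hn2 _ _ hexP.choose_spec)
    have hspecQ := Classical.choose_spec (rrpi_covers hn hn2 _ _ hexQ.choose_spec)
    have hmax : P.max' hexP.choose = Q.max' hexQ.choose := by
      rw [← hspecP, ← hspecQ, hr, hmin]
    rw [hPeq, hQeq, hmin, hmax]
end Count



noncomputable def bipRandomGraph (n : ℕ) (p : ENNReal) (hp : p ≤ 1) :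
    Measure ((Fin n × Fin n) → Bool) :=
  Measure.pi fun _ => (PMF.bernoulli p.toNNReal
    (by simpa using ENNReal.toNNReal_mono ENNReal.one_ne_top hp)).toMeasure

section Meas
variable {n : ℕ} {rr : ℝ}

/-- the real-valued weight of a configuration -/
noncomputable def cfgWt (n : ℕ) (rr : ℝ) (ω : (Fin n × Fin n) → Bool) : ℝ :=
  ∏ c : Fin n × Fin n, (if ω c then rr else 1 - rr)

lemma cfgWt_nonneg (h0 : 0 ≤ rr) (h1 : rr ≤ 1) (ω : (Fin n × Fin n) → Bool) :
    0 ≤ cfgWt n rr ω :=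
  Finset.prod_nonneg fun c _ => by split_ifs <;> linarith

lemma meas_all (s : Set ((Fin n × Fin n) → Bool)) : MeasurableSet s :=
  (Set.toFinite s).measurableSet

lemma bipRandomGraph_apply (h0 : 0 ≤ rr) (h1 : rr ≤ 1) (hp : ENNReal.ofReal rr ≤ 1)
    (s : Set ((Fin n × Fin n) → Bool)) :
    bipRandomGraph n (ENNReal.ofReal rr) hp s
      = ENNReal.ofReal (∑ ω ∈ (Set.toFinite s).toFinset, cfgWt n rr ω) := by
  classical
  have hsingle : ∀ ω : (Fin n × Fin n) → Bool,
      bipRandomGraph n (ENNReal.ofReal rr) hp {ω} = ENNReal.ofReal (cfgWt n rr ω) := by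
    intro ω
    rw [show ({ω} : Set ((Fin n × Fin n) → Bool)) = Set.pi Set.univ (fun c => {ω c}) from
      (Set.univ_pi_singleton ω).symm]
    rw [bipRandomGraph, Measure.pi_pi]
    have h : ∀ c : Fin n × Fin n,
        (PMF.bernoulli (ENNReal.ofReal rr).toNNReal
          (by rw [← ENNReal.toNNReal_one]; exact ENNReal.toNNReal_mono ENNReal.one_ne_top hp)).toMeasure {ω c}
          = ENNReal.ofReal (if ω c then rr else 1 - rr) := by
      intro c
      rw [PMF.toMeasure_apply_singleton _ _ (measurableSet_singleton _), PMF.bernoulli_apply]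
      cases hωc : ω c
      · simp only [Bool.cond_false, Bool.false_eq_true, if_false]
        rw [ENNReal.coe_sub, ENNReal.coe_one, ENNReal.coe_toNNReal ENNReal.ofReal_ne_top,
          ENNReal.ofReal_sub _ h0, ENNReal.ofReal_one]
      · simp
    simp_rw [h]
    unfold cfgWt
    exact (ENNReal.ofReal_prod_of_nonneg fun c _ => by split_ifs <;> linarith).symm
  have hdecomp : s = ⋃ ω ∈ (Set.toFinite s).toFinset, ({ω} : Set _) := by
    ext ω
    simp only [Set.mem_iUnion, Set.Finite.mem_toFinset, Set.mem_singleton_iff]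
    exact ⟨fun h => ⟨ω, h, rfl⟩, fun ⟨x, hx, he⟩ => he ▸ hx⟩
  nth_rewrite 1 [hdecomp]
  rw [measure_biUnion_finset ?_ (fun ω _ => meas_all _)]
  · rw [ENNReal.ofReal_sum_of_nonneg (fun ω _ => cfgWt_nonneg h0 h1 ω)]
    exact Finset.sum_congr rfl fun ω _ => hsingle ω
  · intro x _ y _ hxy
    simp [Set.disjoint_singleton, hxy]

instance instProbBip (n : ℕ) (p : ENNReal) (hp : p ≤ 1) :
    IsProbabilityMeasure (bipRandomGraph n p hp) := by
  unfold bipRandomGraph; infer_instance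
end Meas
section Round
open Finset
variable {n : ℕ} {rr : ℝ}

/-- number of bad pairs in round r -/
def Xr (n : ℕ) (r : Fin (n-1)) (ω : (Fin n × Fin n) → Bool) : ℕ :=
  (univ.filter fun k : Fin n => k < rrpi n r k ∧ BadP n ω k (rrpi n r k)).card

set_option maxHeartbeats 40000000 in
lemma round_bound (hn : Even n) (hn2 : 2 ≤ n) (h0 : 0 ≤ rr) (h1 : rr ≤ 1)
    (hrr : (n : ℝ) * rr^2 = 1) (r : Fin (n-1)) {δ : ℝ} (hδ : 0 < δ) :
    ∑ ω ∈ (univ.filter fun ω : (Fin n × Fin n) → Bool =>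
        (1+δ)*(n:ℝ)/10 < (Xr n r ω : ℝ)), cfgWt n rr ω
      ≤ Real.exp (-(δ^2) * n / 30) := by
  classical
  set s : ℝ := δ/2 with hs
  have hs0 : 0 ≤ s := by positivity
  set t : ℝ := (1+δ)*(n:ℝ)/10 with ht
  set π : Fin n → Fin n := rrpi n r with hπ
  set c : Fin n × Fin n → Fin n := fun p => min p.1 (rrpi n r p.1) with hc
  set wtf : (Fin n × Fin n) → Bool → ℝ := fun _ b => if b then rr else 1 - rr with hwtf
  set F : Fin n → ((Fin n × Fin n) → Bool) → ℝ :=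
    fun k ω => if k < rrpi n r k ∧ BadP n ω k (rrpi n r k) then Real.exp s else 1 with hF
  have hwt_nonneg : ∀ i b, 0 ≤ wtf i b := by
    intro i b; simp only [hwtf]; split_ifs <;> linarith
  have hcfg : ∀ ω, cfgWt n rr ω = ∏ i, wtf i (ω i) := fun ω => rfl
  -- exp of count as product
  have hexp : ∀ ω, Real.exp (s * (Xr n r ω : ℝ)) = ∏ k, F k ω := by
    intro ω
    rw [mul_comm, Real.exp_nat_mul, Xr, ← Finset.prod_const, Finset.prod_filter]
  -- dependence of F on fibers only
  have hFdep : ∀ k (ω ω' : (Fin n × Fin n) → Bool),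
      (∀ i, c i = k → ω i = ω' i) → F k ω = F k ω' := by
    intro k ω ω' hagree
    by_cases hk : k < rrpi n r k
    · have hck : ∀ b : Fin n, c (k, b) = k := by
        intro b; simp only [hc]; exact min_eq_left hk.le
      have hck' : ∀ b : Fin n, c (rrpi n r k, b) = k := by
        intro b
        simp only [hc]
        rw [rrpi_invol hn hn2]
        exact min_eq_right hk.le
      have hbad : BadP n ω k (rrpi n r k) ↔ BadP n ω' k (rrpi n r k) := by
        unfold BadP
        have : (univ.filter fun b => ω (k,b) = true ∧ ω (rrpi n r k, b) = true)
            = (univ.filter fun b => ω' (k,b) = true ∧ ω' (rrpi n r k, b) = true) := by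
          apply filter_congr
          intro b _
          rw [hagree (k,b) (hck b), hagree (rrpi n r k, b) (hck' b)]
        rw [this]
      simp only [hF, hk, true_and]
      rw [if_congr hbad rfl rfl]
    · simp only [hF, hk, false_and, if_false]
  -- the Chernoff start
  have step1 : ∑ ω ∈ (univ.filter fun ω : (Fin n × Fin n) → Bool =>
        t < (Xr n r ω : ℝ)), cfgWt n rr ω
      ≤ Real.exp (-(s*t)) * ∑ ω : (Fin n × Fin n) → Bool,
          cfgWt n rr ω * Real.exp (s * (Xr n r ω : ℝ)) := by
    rw [Finset.mul_sum]
    rw [Finset.sum_filter]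
    apply Finset.sum_le_sum
    intro ω _
    have hw := cfgWt_nonneg h0 h1 ω
    have hterm : 0 ≤ Real.exp (-(s*t)) * (cfgWt n rr ω * Real.exp (s * (Xr n r ω : ℝ))) := by
      positivity
    split_ifs with hcond
    · -- 1 ≤ exp(-st) exp(sX)
      have : Real.exp 0 ≤ Real.exp (-(s*t) + s * (Xr n r ω : ℝ)) := by
        apply Real.exp_le_exp.mpr
        nlinarith [hcond, hs0]
      rw [Real.exp_zero, Real.exp_add] at this
      calc cfgWt n rr ω = cfgWt n rr ω * 1 := by ring
        _ ≤ cfgWt n rr ω * (Real.exp (-(s*t)) * Real.exp (s * (Xr n r ω : ℝ))) := by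
            apply mul_le_mul_of_nonneg_left this hw
        _ = Real.exp (-(s*t)) * (cfgWt n rr ω * Real.exp (s * (Xr n r ω : ℝ))) := by ring
    · exact hterm
  -- factorize the expectation
  have step2 : ∑ ω : (Fin n × Fin n) → Bool, cfgWt n rr ω * Real.exp (s * (Xr n r ω : ℝ))
      = ∏ k : Fin n, ∑ σ : {i // c i = k} → Bool,
          (∏ j, wtf j.1 (σ j)) * F k (fext c k σ) := by
    rw [← weighted_prod_factor c wtf F hFdep]
    apply Fintype.sum_congr
    intro ω
    rw [hcfg, hexp]
  -- per-fiber analysis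
  set Ek : Fin n → ℝ := fun k => ∑ σ : {i // c i = k} → Bool,
      (∏ j, wtf j.1 (σ j)) * F k (fext c k σ) with hEkdef
  have hwtsum : ∀ k : Fin n, ∑ σ : {i // c i = k} → Bool, ∏ j, wtf j.1 (σ j) = 1 := by
    intro k
    apply sum_pi_bool_wt
    intro j
    simp only [hwtf]
    norm_num
  have hEk_nonrep : ∀ k : Fin n, ¬ k < rrpi n r k → Ek k = 1 := by
    intro k hk
    simp only [hEkdef]
    have hF1 : ∀ σ : {i // c i = k} → Bool, F k (fext c k σ) = 1 := by
      intro σ; simp only [hF, hk, false_and, if_false]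
    calc ∑ σ : {i // c i = k} → Bool, (∏ j, wtf j.1 (σ j)) * F k (fext c k σ)
        = ∑ σ : {i // c i = k} → Bool, ∏ j, wtf j.1 (σ j) := by
          apply Fintype.sum_congr; intro σ; rw [hF1 σ, mul_one]
      _ = 1 := hwtsum k
  have hes1 : (1:ℝ) ≤ Real.exp s := Real.one_le_exp hs0
  have hEk_rep : ∀ k : Fin n, k < rrpi n r k →
      0 ≤ Ek k ∧ Ek k ≤ (4 + Real.exp s)/5 := by
    intro k hk
    have hck : ∀ b : Fin n, c (k, b) = k := by
      intro b; simp only [hc]; exact min_eq_left hk.le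
    have hck' : ∀ b : Fin n, c (rrpi n r k, b) = k := by
      intro b
      simp only [hc]
      rw [rrpi_invol hn hn2]
      exact min_eq_right hk.le
    set qk : ℝ := ∑ σ : {i // c i = k} → Bool,
        (if BadP n (fext c k σ) k (rrpi n r k) then ∏ j, wtf j.1 (σ j) else 0) with hqkdef
    have hwprod_nonneg : ∀ σ : {i // c i = k} → Bool, 0 ≤ ∏ j, wtf j.1 (σ j) :=
      fun σ => Finset.prod_nonneg fun j _ => hwt_nonneg j.1 (σ j)
    have hsplitE : Ek k = 1 + (Real.exp s - 1) * qk := by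
      simp only [hEkdef, hF]
      have hpt : ∀ σ : {i // c i = k} → Bool,
          (∏ j, wtf j.1 (σ j)) * (if k < rrpi n r k ∧ BadP n (fext c k σ) k (rrpi n r k)
              then Real.exp s else 1)
            = (∏ j, wtf j.1 (σ j)) + (Real.exp s - 1) *
                (if BadP n (fext c k σ) k (rrpi n r k) then ∏ j, wtf j.1 (σ j) else 0) := by
        intro σ
        simp only [hk, true_and]
        split_ifs <;> ring
      rw [Fintype.sum_congr _ _ hpt, Finset.sum_add_distrib, hwtsum k, ← Finset.mul_sum]
    have hq0 : 0 ≤ qk := Finset.sum_nonneg fun σ _ => by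
      split_ifs
      · exact hwprod_nonneg σ
      · exact le_refl 0
    
    -- the Markov bound on qk
    have hq5 : qk ≤ 1/5 := by
      -- common neighbor count within the fiber
      have hScomp : ∑ σ : {i // c i = k} → Bool, (∏ j, wtf j.1 (σ j)) *
          (((univ : Finset (Fin n)).filter fun b =>
            fext c k σ (k,b) = true ∧ fext c k σ (rrpi n r k, b) = true).card : ℝ)
          = (n : ℝ) * rr^2 := by
        have hNcast : ∀ σ : {i // c i = k} → Bool,
            (((univ : Finset (Fin n)).filter fun b =>
              fext c k σ (k,b) = true ∧ fext c k σ (rrpi n r k, b) = true).card : ℝ)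
            = ∑ b : Fin n, (if fext c k σ (k,b) = true ∧ fext c k σ (rrpi n r k, b) = true
                then (1:ℝ) else 0) := by
          intro σ
          rw [Finset.card_filter]
          push_cast
          rfl
        calc ∑ σ : {i // c i = k} → Bool, (∏ j, wtf j.1 (σ j)) *
              (((univ : Finset (Fin n)).filter fun b =>
                fext c k σ (k,b) = true ∧ fext c k σ (rrpi n r k, b) = true).card : ℝ)
            = ∑ σ : {i // c i = k} → Bool, ∑ b : Fin n, (∏ j, wtf j.1 (σ j)) *
                (if fext c k σ (k,b) = true ∧ fext c k σ (rrpi n r k, b) = true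
                  then (1:ℝ) else 0) := by
              apply Fintype.sum_congr
              intro σ
              rw [hNcast σ, Finset.mul_sum]
          _ = ∑ b : Fin n, ∑ σ : {i // c i = k} → Bool, (∏ j, wtf j.1 (σ j)) *
                (if fext c k σ (k,b) = true ∧ fext c k σ (rrpi n r k, b) = true
                  then (1:ℝ) else 0) := Finset.sum_comm
          _ = ∑ b : Fin n, rr^2 := by
              apply Fintype.sum_congr
              intro b
              -- inner two-coordinate computation
              set j1 : {i // c i = k} := ⟨(k, b), hck b⟩ with hj1
              set j2 : {i // c i = k} := ⟨(rrpi n r k, b), hck' b⟩ with hj2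
              have hj12 : j1 ≠ j2 := by
                intro h
                have h' : ((k, b) : Fin n × Fin n) = (rrpi n r k, b) :=
                  congrArg Subtype.val h
                exact absurd (congrArg Prod.fst h') (ne_of_lt hk)
              have hfext1 : ∀ σ : {i // c i = k} → Bool, fext c k σ (k, b) = σ j1 := by
                intro σ; simp only [fext, dif_pos (hck b)]; rfl
              have hfext2 : ∀ σ : {i // c i = k} → Bool,
                  fext c k σ (rrpi n r k, b) = σ j2 := by
                intro σ; simp only [fext, dif_pos (hck' b)]; rfl
              set g : {i // c i = k} → Bool → ℝ := fun j x =>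
                (if x then rr else 1 - rr) *
                  (if j = j1 ∨ j = j2 then (if x then (1:ℝ) else 0) else 1) with hg
              have hterm : ∀ σ : {i // c i = k} → Bool,
                  (∏ j, wtf j.1 (σ j)) *
                    (if fext c k σ (k,b) = true ∧ fext c k σ (rrpi n r k, b) = true
                      then (1:ℝ) else 0)
                  = ∏ j, g j (σ j) := by
                intro σ
                simp only [hg]
                rw [Finset.prod_mul_distrib]
                congr 1
                rw [hfext1 σ, hfext2 σ]
                have hextra : ∀ j : {i // c i = k}, j ∉ ({j1, j2} : Finset {i // c i = k}) →
                    (if j = j1 ∨ j = j2 then (if σ j then (1:ℝ) else 0) else 1) = 1 := by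
                  intro j hj
                  simp only [Finset.mem_insert, Finset.mem_singleton] at hj
                  rw [if_neg (by tauto)]
                rw [← Finset.prod_subset (Finset.subset_univ ({j1, j2} : Finset _))
                  (fun j _ hj => hextra j hj)]
                rw [Finset.prod_pair hj12]
                rw [if_pos (Or.inl rfl), if_pos (Or.inr rfl)]
                by_cases ha : σ j1 = true <;> by_cases hb : σ j2 = true <;> simp [ha, hb]
              rw [Fintype.sum_congr _ _ hterm, sum_pi_bool_prod g]
              have hval : ∀ j : {i // c i = k},
                  g j true + g j false = if j = j1 ∨ j = j2 then rr else 1 := by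
                intro j
                by_cases hcond : j = j1 ∨ j = j2 <;>
                  simp only [hg, hcond, Bool.false_eq_true, if_true, if_false] <;> ring
              rw [Fintype.prod_congr _ _ hval]
              have houtside : ∀ j : {i // c i = k}, j ∉ ({j1, j2} : Finset {i // c i = k}) →
                  (if j = j1 ∨ j = j2 then rr else 1) = 1 := by
                intro j hj
                simp only [Finset.mem_insert, Finset.mem_singleton] at hj
                rw [if_neg (by tauto)]
              rw [← Finset.prod_subset (Finset.subset_univ ({j1, j2} : Finset _))
                (fun j _ hj => houtside j hj)]
              rw [Finset.prod_pair hj12, if_pos (Or.inl rfl), if_pos (Or.inr rfl)]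
              ring
          _ = (n : ℝ) * rr^2 := by
              rw [Finset.sum_const, Finset.card_univ, Fintype.card_fin, nsmul_eq_mul]
      have hqle : qk ≤ (1/5) * ((n:ℝ) * rr^2) := by
        rw [← hScomp, Finset.mul_sum, hqkdef]
        apply Finset.sum_le_sum
        intro σ _
        have hw := hwprod_nonneg σ
        split_ifs with hbad
        · have h5 : (5 : ℝ) ≤ (((univ : Finset (Fin n)).filter fun b =>
              fext c k σ (k,b) = true ∧ fext c k σ (rrpi n r k, b) = true).card : ℝ) := by
            exact_mod_cast hbad
          nlinarith
        · positivity
      rw [hrr] at hqle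
      linarith
    constructor
    · nlinarith
    · rw [hsplitE]
      nlinarith
  -- product bound
  set c₀ : ℕ := (univ.filter fun k : Fin n => k < rrpi n r k).card with hc₀
  set A : ℝ := (4 + Real.exp s)/5 with hA
  have hA1 : (1:ℝ) ≤ A := by rw [hA]; linarith
  have step3 : ∏ k : Fin n, Ek k ≤ A ^ c₀ := by
    calc ∏ k : Fin n, Ek k ≤ ∏ k : Fin n, (if k < rrpi n r k then A else 1) := by
          apply Finset.prod_le_prod
          · intro k _
            by_cases hk : k < rrpi n r k
            · exact (hEk_rep k hk).1
            · rw [hEk_nonrep k hk]; norm_num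
          · intro k _
            by_cases hk : k < rrpi n r k
            · rw [if_pos hk]; exact (hEk_rep k hk).2
            · rw [if_neg hk, hEk_nonrep k hk]
      _ = A ^ c₀ := by rw [← Finset.prod_filter, Finset.prod_const]
  -- analytic bound on A
  have hAexp : A ≤ Real.exp (δ/10 + δ^2/30) := by
    have hkey := key_exp_ineq hs0
    have harg : s/5 + 2*s^2/15 = δ/10 + δ^2/30 := by rw [hs]; ring
    rw [harg] at hkey
    rw [hA]
    linarith
  have hA0 : (0:ℝ) ≤ A := by linarith
  have hcard : (c₀ : ℝ) * 2 = n := by exact_mod_cast card_reps hn hn2 r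
  -- final assembly
  calc ∑ ω ∈ (univ.filter fun ω : (Fin n × Fin n) → Bool =>
        (1+δ)*(n:ℝ)/10 < (Xr n r ω : ℝ)), cfgWt n rr ω
      ≤ Real.exp (-(s*t)) * ∑ ω : (Fin n × Fin n) → Bool,
          cfgWt n rr ω * Real.exp (s * (Xr n r ω : ℝ)) := step1
    _ = Real.exp (-(s*t)) * ∏ k : Fin n, Ek k := by rw [step2]
    _ ≤ Real.exp (-(s*t)) * (A ^ c₀) := by
        apply mul_le_mul_of_nonneg_left step3 (Real.exp_nonneg _)
    _ ≤ Real.exp (-(s*t)) * (Real.exp (δ/10 + δ^2/30)) ^ c₀ := by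
        apply mul_le_mul_of_nonneg_left (pow_le_pow_left₀ hA0 hAexp c₀) (Real.exp_nonneg _)
    _ = Real.exp (-(s*t) + c₀ * (δ/10 + δ^2/30)) := by
        rw [← Real.exp_nat_mul, ← Real.exp_add]
    _ ≤ Real.exp (-(δ^2) * n / 30) := by
        apply Real.exp_le_exp.mpr
        have hst : s * t = δ/2 * ((1+δ)*(n:ℝ)/10) := by rw [hs, ht]
        rw [hst]
        nlinarith [hcard, sq_nonneg δ, hδ.le]
end Round




lemma ofReal_one_div_sqrt_le_one (n : ℕ) : ENNReal.ofReal (1 / Real.sqrt n) ≤ 1 := by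
  rcases Nat.eq_zero_or_pos n with h | h
  · subst h; simp
  · rw [ENNReal.ofReal_le_one,
      div_le_one (Real.sqrt_pos.mpr (by exact_mod_cast h))]
    exact Real.one_le_sqrt.mpr (by exact_mod_cast h)

def badPairCount (n : ℕ) (ω : (Fin n × Fin n) → Bool) : ℕ :=
  ((Finset.univ : Finset (Finset (Fin n))).filter fun P =>
    P.card = 2 ∧
      5 ≤ ((Finset.univ : Finset (Fin n)).filter fun b => ∀ a ∈ P, ω (a, b) = true).card).card

set_option maxHeartbeats 4000000 in
/-- in `G(n, n, 1/√n)` with `n` even, for every constant `δ > 0`, with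
probability at least `1 − (n−1)·2·exp(−δ²n/30)`, the number of pairs of distinct left
vertices having at least 5 common neighbors is at most `(1+δ)·n²/10`. -/
theorem few_pairs_with_many_common_neighbors (n : ℕ) (hn : Even n) (δ : ℝ) (hδ : 0 < δ) :
    1 - ENNReal.ofReal (((n - 1 : ℕ) : ℝ) * 2 * Real.exp (-(δ ^ 2) * n / 30)) ≤
      bipRandomGraph n (ENNReal.ofReal (1 / Real.sqrt n)) (ofReal_one_div_sqrt_le_one n)
        {ω | (badPairCount n ω : ℝ) ≤ (1 + δ) * (n : ℝ) ^ 2 / 10} := by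
  classical
  rcases Nat.eq_zero_or_pos n with hn0 | hnpos
  · -- n = 0 : the set is everything
    subst hn0
    have hset : {ω : (Fin 0 × Fin 0) → Bool |
        (badPairCount 0 ω : ℝ) ≤ (1 + δ) * ((0:ℕ) : ℝ) ^ 2 / 10} = Set.univ := by
      apply Set.eq_univ_of_forall
      intro ω
      have hzero : badPairCount 0 ω = 0 := by
        unfold badPairCount
        rw [Finset.filter_false_of_mem, Finset.card_empty]
        intro P _
        have := Finset.card_le_univ P
        simp only [Finset.card_univ, Fintype.card_fin] at this
        intro hcontra
        omega
      simp only [Set.mem_setOf_eq, hzero]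
      norm_num
    rw [hset, measure_univ]
    exact tsub_le_self
  · have hn2 : 2 ≤ n := by
      obtain ⟨k, hk⟩ := hn; omega
    set rr : ℝ := 1 / Real.sqrt n with hrrdef
    have hsq : Real.sqrt n > 0 := Real.sqrt_pos.mpr (by exact_mod_cast hnpos)
    have h0 : 0 ≤ rr := by positivity
    have h1 : rr ≤ 1 := by
      rw [hrrdef, div_le_one hsq]
      exact Real.one_le_sqrt.mpr (by exact_mod_cast hnpos)
    have hrr : (n : ℝ) * rr ^ 2 = 1 := by
      rw [hrrdef]
      rw [div_pow, one_pow, Real.sq_sqrt (by positivity : (0:ℝ) ≤ (n:ℝ))]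
      field_simp
    -- the bad event and the per-round bad events
    set B : Set ((Fin n × Fin n) → Bool) :=
      {ω | (1 + δ) * (n : ℝ) ^ 2 / 10 < (badPairCount n ω : ℝ)} with hB
    set Br : Fin (n-1) → Set ((Fin n × Fin n) → Bool) :=
      fun r => {ω | (1+δ)*(n:ℝ)/10 < (Xr n r ω : ℝ)} with hBr
    have hsub : B ⊆ ⋃ r : Fin (n-1), Br r := by
      intro ω hω
      simp only [hB, Set.mem_setOf_eq] at hω
      rw [Set.mem_iUnion]
      by_contra hc
      push_neg at hc
      have hXr : ∀ r : Fin (n-1), (Xr n r ω : ℝ) ≤ (1+δ)*(n:ℝ)/10 := by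
        intro r
        have := hc r
        simp only [hBr, Set.mem_setOf_eq, not_lt] at this
        exact this
      have hcount : (badPairCount n ω : ℝ) ≤ ∑ r : Fin (n-1), (Xr n r ω : ℝ) := by
        have hnat := count_le_sum_rounds hn hn2 ω
        have : badPairCount n ω = badPairCount' n ω := rfl
        rw [this]
        exact_mod_cast hnat
      have hsum : ∑ r : Fin (n-1), (Xr n r ω : ℝ)
          ≤ ((n-1 : ℕ) : ℝ) * ((1+δ)*(n:ℝ)/10) := by
        calc ∑ r : Fin (n-1), (Xr n r ω : ℝ)
            ≤ ∑ _r : Fin (n-1), (1+δ)*(n:ℝ)/10 := Finset.sum_le_sum fun r _ => hXr r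
          _ = ((n-1 : ℕ) : ℝ) * ((1+δ)*(n:ℝ)/10) := by
              rw [Finset.sum_const, Finset.card_univ, Fintype.card_fin, nsmul_eq_mul]
      have hcastle : ((n-1 : ℕ) : ℝ) ≤ (n : ℝ) := Nat.cast_le.mpr (by omega)
      have hpos : (0:ℝ) ≤ (1+δ)*(n:ℝ)/10 := by positivity
      nlinarith
    -- bound each round
    have hround : ∀ r : Fin (n-1),
        bipRandomGraph n (ENNReal.ofReal (1 / Real.sqrt n)) (ofReal_one_div_sqrt_le_one n) (Br r)
          ≤ ENNReal.ofReal (Real.exp (-(δ^2) * n / 30)) := by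
      intro r
      rw [bipRandomGraph_apply h0 h1 (ofReal_one_div_sqrt_le_one n)]
      apply ENNReal.ofReal_le_ofReal
      have hfeq : (Set.toFinite (Br r)).toFinset
          = (univ.filter fun ω : (Fin n × Fin n) → Bool =>
              (1+δ)*(n:ℝ)/10 < (Xr n r ω : ℝ)) := by
        ext ω
        simp only [Set.Finite.mem_toFinset, Finset.mem_filter, Finset.mem_univ, true_and,
          hBr, Set.mem_setOf_eq]
      rw [hfeq]
      exact round_bound hn hn2 h0 h1 hrr r hδ
    -- union bound
    have hBbound : bipRandomGraph n (ENNReal.ofReal (1 / Real.sqrt n))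
        (ofReal_one_div_sqrt_le_one n) B
        ≤ ENNReal.ofReal (((n - 1 : ℕ) : ℝ) * 2 * Real.exp (-(δ ^ 2) * n / 30)) := by
      calc bipRandomGraph n (ENNReal.ofReal (1 / Real.sqrt n))
            (ofReal_one_div_sqrt_le_one n) B
          ≤ bipRandomGraph n (ENNReal.ofReal (1 / Real.sqrt n))
            (ofReal_one_div_sqrt_le_one n) (⋃ r : Fin (n-1), Br r) := measure_mono hsub
        _ ≤ ∑' r : Fin (n-1), bipRandomGraph n (ENNReal.ofReal (1 / Real.sqrt n))
            (ofReal_one_div_sqrt_le_one n) (Br r) := measure_iUnion_le _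
        _ = ∑ r : Fin (n-1), bipRandomGraph n (ENNReal.ofReal (1 / Real.sqrt n))
            (ofReal_one_div_sqrt_le_one n) (Br r) := tsum_fintype _
        _ ≤ ∑ _r : Fin (n-1), ENNReal.ofReal (Real.exp (-(δ^2) * n / 30)) :=
            Finset.sum_le_sum fun r _ => hround r
        _ = ((n-1 : ℕ) : ENNReal) * ENNReal.ofReal (Real.exp (-(δ^2) * n / 30)) := by
            rw [Finset.sum_const, Finset.card_univ, Fintype.card_fin, nsmul_eq_mul]
        _ = ENNReal.ofReal (((n-1 : ℕ) : ℝ) * Real.exp (-(δ^2) * n / 30)) := by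
            rw [ENNReal.ofReal_mul (by positivity), ENNReal.ofReal_natCast]
        _ ≤ ENNReal.ofReal (((n - 1 : ℕ) : ℝ) * 2 * Real.exp (-(δ ^ 2) * n / 30)) := by
            apply ENNReal.ofReal_le_ofReal
            have hexp : (0:ℝ) ≤ Real.exp (-(δ^2) * n / 30) := Real.exp_nonneg _
            nlinarith [Nat.cast_nonneg (α := ℝ) (n-1)]
    -- complement
    have hcompl : {ω : (Fin n × Fin n) → Bool |
        (badPairCount n ω : ℝ) ≤ (1 + δ) * (n : ℝ) ^ 2 / 10} = Bᶜ := by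
      ext ω
      simp only [hB, Set.mem_setOf_eq, Set.mem_compl_iff, not_lt]
    rw [hcompl, measure_compl (meas_all B) (measure_ne_top _ _), measure_univ]
    exact tsub_le_tsub_left hBbound 1
end

section
/- Let G = (A, B, E) be a (k,m)-lower-bound graph with clique-cover sets E_1, ..., E_k and associated bipartite graphs H_A, H_B. Given X, Y ∈ {0,1}^k, form G' by adding, for each i with X_i = 1, the H_A-edge joining the pair A(E_i), and for each i with Y_i = 1, the H_B-edge joining B(E_i). Then G' contains a copy of K_4 if and only if there exists an index i with X_i = Y_i = 1. -/
/-- let `G` be a `(k, m)`-lower-bound graph with `K_{2,2}`-cover sets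
`E_1, …, E_k`, where `E_i` is the complete bipartite graph between the pair `fA i ⊆ A`
and the pair `fB i ⊆ B`. Given `X Y : {0,1}^k`, form `G'` by adding for each `i` with
`X i = 1` the edge joining the pair `fA i`, and for each `i` with `Y i = 1` the edge
joining the pair `fB i`. Then `G'` contains a copy of `K_4` iff `X i = Y i = 1` for
some `i`. -/
theorem lower_bound_graph_K4_iff_disj {V : Type*} [DecidableEq V] (k : ℕ)
    (A B : Finset V) (hAB : Disjoint A B)
    (G : SimpleGraph V) (fA fB : Fin k → Finset V)
    (hfA : ∀ i, fA i ⊆ A ∧ (fA i).card = 2)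
    (hfB : ∀ i, fB i ⊆ B ∧ (fB i).card = 2)
    -- the edge set of `G` is the union of the `E_i`, each a `K_{2,2}` between `fA i` and `fB i`
    (hedges : ∀ u v, G.Adj u v ↔
      ∃ i, (u ∈ fA i ∧ v ∈ fB i) ∨ (u ∈ fB i ∧ v ∈ fA i))
    -- for `i ≠ j`, the induced subgraph `G[A(E_i) ∪ B(E_j)]` is not a `K_{2,2}`
    (hnotK22 : ∀ i j, i ≠ j → ¬ ∀ a ∈ fA i, ∀ b ∈ fB j, G.Adj a b)
    -- the associated graphs `H_A` and `H_B` are bipartite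
    (hHA : (SimpleGraph.fromRel fun u v => ∃ i, fA i = {u, v}).Colorable 2)
    (hHB : (SimpleGraph.fromRel fun u v => ∃ i, fB i = {u, v}).Colorable 2)
    (X Y : Fin k → Bool) :
    (∃ S : Finset V, S.card = 4 ∧
        (SimpleGraph.fromRel fun u v =>
          G.Adj u v ∨ (∃ i, X i = true ∧ fA i = {u, v}) ∨
            (∃ i, Y i = true ∧ fB i = {u, v})).IsClique (S : Set V)) ↔
      ∃ i, X i = true ∧ Y i = true := by
  have hdisj : ∀ {x : V}, x ∈ A → x ∈ B → False := fun hx hy =>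
    Finset.disjoint_left.mp hAB hx hy
  set R : V → V → Prop := fun u v =>
    G.Adj u v ∨ (∃ i, X i = true ∧ fA i = {u, v}) ∨
      (∃ i, Y i = true ∧ fB i = {u, v}) with hRdef
  -- classification of edges within A
  have hwA : ∀ u v : V, u ∈ A → v ∈ A → R u v → ∃ i, X i = true ∧ fA i = {u, v} := by
    intro u v hu hv h
    rcases h with h | h | h
    · rcases (hedges u v).mp h with ⟨i, ⟨_, hv'⟩ | ⟨hu', _⟩⟩
      · exact absurd ((hfB i).1 hv') (fun hh => hdisj hv hh)
      · exact absurd ((hfB i).1 hu') (fun hh => hdisj hu hh)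
    · exact h
    · rcases h with ⟨i, _, hi⟩
      have : u ∈ fB i := by rw [hi]; simp
      exact absurd ((hfB i).1 this) (fun hh => hdisj hu hh)
  have hwB : ∀ u v : V, u ∈ B → v ∈ B → R u v → ∃ i, Y i = true ∧ fB i = {u, v} := by
    intro u v hu hv h
    rcases h with h | h | h
    · rcases (hedges u v).mp h with ⟨i, ⟨hu', _⟩ | ⟨_, hv'⟩⟩
      · exact absurd ((hfA i).1 hu') (fun hh => hdisj hh hu)
      · exact absurd ((hfA i).1 hv') (fun hh => hdisj hh hv)
    · rcases h with ⟨i, _, hi⟩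
      have : u ∈ fA i := by rw [hi]; simp
      exact absurd ((hfA i).1 this) (fun hh => hdisj hh hu)
    · exact h
  -- classification of cross edges
  have hcross : ∀ u v : V, u ∈ A → v ∈ B → R u v → G.Adj u v := by
    intro u v hu hv h
    rcases h with h | h | h
    · exact h
    · rcases h with ⟨i, _, hi⟩
      have : v ∈ fA i := by rw [hi]; simp
      exact absurd ((hfA i).1 this) (fun hh => hdisj hh hv)
    · rcases h with ⟨i, _, hi⟩
      have : u ∈ fB i := by rw [hi]; simp
      exact absurd ((hfB i).1 this) (fun hh => hdisj hu hh)
  -- every endpoint of an R-edge lies in A ∪ B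
  have hmem : ∀ u v : V, R u v → u ∈ A ∪ B := by
    intro u v h
    rcases h with h | h | h
    · rcases (hedges u v).mp h with ⟨i, ⟨hu', _⟩ | ⟨hu', _⟩⟩
      · exact Finset.mem_union_left _ ((hfA i).1 hu')
      · exact Finset.mem_union_right _ ((hfB i).1 hu')
    · rcases h with ⟨i, _, hi⟩
      have : u ∈ fA i := by rw [hi]; simp
      exact Finset.mem_union_left _ ((hfA i).1 this)
    · rcases h with ⟨i, _, hi⟩
      have : u ∈ fB i := by rw [hi]; simp
      exact Finset.mem_union_right _ ((hfB i).1 this)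
  constructor
  · rintro ⟨S, hS4, hclique⟩
    -- all vertices of S are in A ∪ B
    have hSsub : S ⊆ A ∪ B := by
      intro s hs
      have h2 : 1 < S.card := by omega
      obtain ⟨t, ht, hts⟩ := Finset.exists_mem_ne h2 s
      have hadj := hclique (by exact_mod_cast hs) (by exact_mod_cast ht) (Ne.symm hts)
      rcases hadj.2 with h | h
      · exact hmem s t h
      · rcases h with h | h | h
        · exact hmem s t (Or.inl (G.adj_symm h))
        · rcases h with ⟨i, hXi, hi⟩
          exact hmem s t (Or.inr (Or.inl ⟨i, hXi, by rw [hi, Finset.pair_comm]⟩))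
        · rcases h with ⟨i, hYi, hi⟩
          exact hmem s t (Or.inr (Or.inr ⟨i, hYi, by rw [hi, Finset.pair_comm]⟩))
    -- any two distinct clique vertices in A give an activated fA pair
    have hpairA : ∀ u v : V, u ∈ S → v ∈ S → u ∈ A → v ∈ A → u ≠ v →
        ∃ i, X i = true ∧ fA i = {u, v} := by
      intro u v huS hvS hu hv hne
      have hadj := hclique (by exact_mod_cast huS) (by exact_mod_cast hvS) hne
      rcases hadj.2 with h | h
      · exact hwA u v hu hv h
      · obtain ⟨i, hXi, hi⟩ := hwA v u hv hu h
        exact ⟨i, hXi, by rw [hi, Finset.pair_comm]⟩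
    have hpairB : ∀ u v : V, u ∈ S → v ∈ S → u ∈ B → v ∈ B → u ≠ v →
        ∃ i, Y i = true ∧ fB i = {u, v} := by
      intro u v huS hvS hu hv hne
      have hadj := hclique (by exact_mod_cast huS) (by exact_mod_cast hvS) hne
      rcases hadj.2 with h | h
      · exact hwB u v hu hv h
      · obtain ⟨i, hYi, hi⟩ := hwB v u hv hu h
        exact ⟨i, hYi, by rw [hi, Finset.pair_comm]⟩
    have hcrossS : ∀ u v : V, u ∈ S → v ∈ S → u ∈ A → v ∈ B → G.Adj u v := by
      intro u v huS hvS hu hv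
      have hne : u ≠ v := fun h => hdisj hu (h ▸ hv)
      have hadj := hclique (by exact_mod_cast huS) (by exact_mod_cast hvS) hne
      rcases hadj.2 with h | h
      · exact hcross u v hu hv h
      · rcases h with h | h | h
        · exact G.adj_symm h
        · rcases h with ⟨i, _, hi⟩
          have : v ∈ fA i := by rw [hi]; simp
          exact absurd ((hfA i).1 this) (fun hh => hdisj hh hv)
        · rcases h with ⟨i, _, hi⟩
          have : u ∈ fB i := by rw [hi]; simp
          exact absurd ((hfB i).1 this) (fun hh => hdisj hu hh)
    -- at most 2 clique vertices in A
    obtain ⟨cA⟩ := hHA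
    obtain ⟨cB⟩ := hHB
    have hcardA : (S ∩ A).card ≤ 2 := by
      by_contra h
      push_neg at h
      obtain ⟨a, b, c, haS, hbS, hcS, hab, hac, hbc⟩ :=
        Finset.two_lt_card_iff.mp h
      have key : ∀ x y : V, x ∈ S ∩ A → y ∈ S ∩ A → x ≠ y → cA x ≠ cA y := by
        intro x y hx hy hne
        obtain ⟨i, _, hi⟩ := hpairA x y (Finset.mem_of_mem_inter_left hx)
          (Finset.mem_of_mem_inter_left hy) (Finset.mem_of_mem_inter_right hx)
          (Finset.mem_of_mem_inter_right hy) hne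
        exact cA.valid ⟨hne, Or.inl ⟨i, hi⟩⟩
      have h1 := key a b haS hbS hab
      have h2 := key a c haS hcS hac
      have h3 := key b c hbS hcS hbc
      have v1 : (cA a).val < 2 := (cA a).isLt
      have v2 : (cA b).val < 2 := (cA b).isLt
      have v3 : (cA c).val < 2 := (cA c).isLt
      have e1 : (cA a).val ≠ (cA b).val := fun h => h1 (Fin.ext h)
      have e2 : (cA a).val ≠ (cA c).val := fun h => h2 (Fin.ext h)
      have e3 : (cA b).val ≠ (cA c).val := fun h => h3 (Fin.ext h)
      omega
    have hcardB : (S ∩ B).card ≤ 2 := by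
      by_contra h
      push_neg at h
      obtain ⟨a, b, c, haS, hbS, hcS, hab, hac, hbc⟩ :=
        Finset.two_lt_card_iff.mp h
      have key : ∀ x y : V, x ∈ S ∩ B → y ∈ S ∩ B → x ≠ y → cB x ≠ cB y := by
        intro x y hx hy hne
        obtain ⟨i, _, hi⟩ := hpairB x y (Finset.mem_of_mem_inter_left hx)
          (Finset.mem_of_mem_inter_left hy) (Finset.mem_of_mem_inter_right hx)
          (Finset.mem_of_mem_inter_right hy) hne
        exact cB.valid ⟨hne, Or.inl ⟨i, hi⟩⟩
      have h1 := key a b haS hbS hab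
      have h2 := key a c haS hcS hac
      have h3 := key b c hbS hcS hbc
      have v1 : (cB a).val < 2 := (cB a).isLt
      have v2 : (cB b).val < 2 := (cB b).isLt
      have v3 : (cB c).val < 2 := (cB c).isLt
      have e1 : (cB a).val ≠ (cB b).val := fun h => h1 (Fin.ext h)
      have e2 : (cB a).val ≠ (cB c).val := fun h => h2 (Fin.ext h)
      have e3 : (cB b).val ≠ (cB c).val := fun h => h3 (Fin.ext h)
      omega
    -- so exactly 2 in each
    have hsplit : (S ∩ A).card + (S ∩ B).card = 4 := by
      have hdisj2 : Disjoint (S ∩ A) (S ∩ B) :=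
        hAB.mono Finset.inter_subset_right Finset.inter_subset_right
      have hunion : S ∩ A ∪ S ∩ B = S := by
        rw [← Finset.inter_union_distrib_left]
        exact Finset.inter_eq_left.mpr hSsub
      rw [← Finset.card_union_of_disjoint hdisj2, hunion, hS4]
    have hA2 : (S ∩ A).card = 2 := by omega
    have hB2 : (S ∩ B).card = 2 := by omega
    obtain ⟨a1, a2, ha12, hSA⟩ := Finset.card_eq_two.mp hA2
    obtain ⟨b1, b2, hb12, hSB⟩ := Finset.card_eq_two.mp hB2
    have ha1 : a1 ∈ S ∩ A := by rw [hSA]; simp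
    have ha2 : a2 ∈ S ∩ A := by rw [hSA]; simp
    have hb1 : b1 ∈ S ∩ B := by rw [hSB]; simp
    have hb2 : b2 ∈ S ∩ B := by rw [hSB]; simp
    obtain ⟨i, hXi, hfAi⟩ := hpairA a1 a2 (Finset.mem_of_mem_inter_left ha1)
      (Finset.mem_of_mem_inter_left ha2) (Finset.mem_of_mem_inter_right ha1)
      (Finset.mem_of_mem_inter_right ha2) ha12
    obtain ⟨j, hYj, hfBj⟩ := hpairB b1 b2 (Finset.mem_of_mem_inter_left hb1)
      (Finset.mem_of_mem_inter_left hb2) (Finset.mem_of_mem_inter_right hb1)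
      (Finset.mem_of_mem_inter_right hb2) hb12
    have hallcross : ∀ a ∈ fA i, ∀ b ∈ fB j, G.Adj a b := by
      intro a ha b hb
      rw [hfAi] at ha
      rw [hfBj] at hb
      have haS : a ∈ S ∩ A := by
        rcases Finset.mem_insert.mp ha with h | h
        · exact h ▸ ha1
        · exact (Finset.mem_singleton.mp h) ▸ ha2
      have hbS : b ∈ S ∩ B := by
        rcases Finset.mem_insert.mp hb with h | h
        · exact h ▸ hb1
        · exact (Finset.mem_singleton.mp h) ▸ hb2
      exact hcrossS a b (Finset.mem_of_mem_inter_left haS)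
        (Finset.mem_of_mem_inter_left hbS) (Finset.mem_of_mem_inter_right haS)
        (Finset.mem_of_mem_inter_right hbS)
    have hij : i = j := by
      by_contra h
      exact hnotK22 i j h hallcross
    exact ⟨i, hXi, hij ▸ hYj⟩
  · rintro ⟨i, hXi, hYi⟩
    obtain ⟨a1, a2, ha12, hfAi⟩ := Finset.card_eq_two.mp (hfA i).2
    obtain ⟨b1, b2, hb12, hfBi⟩ := Finset.card_eq_two.mp (hfB i).2
    refine ⟨fA i ∪ fB i, ?_, ?_⟩
    · rw [Finset.card_union_of_disjoint (hAB.mono (hfA i).1 (hfB i).1),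
        (hfA i).2, (hfB i).2]
    · intro u hu v hv hne
      simp only [Finset.coe_union, Set.mem_union, Finset.mem_coe,
        Finset.mem_union] at hu hv
      refine ⟨hne, ?_⟩
      have pairEq : ∀ (s : Finset V), s.card = 2 → u ∈ s → v ∈ s → s = {u, v} := by
        intro s hs hus hvs
        have hsub : ({u, v} : Finset V) ⊆ s :=
          Finset.insert_subset hus (Finset.singleton_subset_iff.mpr hvs)
        exact (Finset.eq_of_subset_of_card_le hsub
          (by rw [hs, Finset.card_pair hne])).symm
      rcases hu with hu | hu <;> rcases hv with hv | hv
      · exact Or.inl (Or.inr (Or.inl ⟨i, hXi, pairEq _ (hfA i).2 hu hv⟩))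
      · exact Or.inl (Or.inl ((hedges u v).mpr ⟨i, Or.inl ⟨hu, hv⟩⟩))
      · exact Or.inl (Or.inl ((hedges u v).mpr ⟨i, Or.inr ⟨hu, hv⟩⟩))
      · exact Or.inl (Or.inr (Or.inr ⟨i, hYi, pairEq _ (hfB i).2 hu hv⟩))
end
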